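/- Let p > 3 be a prime and let G = Φ₂₇(1⁶) be the group of order p⁶ with presentation on generators α, α₁, α₂, α₃, α₄, β and relations [αᵢ,α] = αᵢ₊₁ for i = 1,2,3, [α₁,β] = α₄, [α₁,α₂] = α₄, αᵖ = βᵖ = 1, and αⱼ^(p) = 1 for j = 1,2,3,4, where αⱼ^(p) denotes αⱼᵖ·αⱼ₊₁^C(p,2)·αⱼ₊₂^C(p,3)·⋯·α₄^C(p,5−j); every commutator of a pair of generators not listed among these relations is declared trivial. Then the Bogomolov multiplier B₀(G) is trivial. -/

import Mathlib

/-!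
Φ₂₇(1⁶): relations [αᵢ,α]=αᵢ₊₁ (i=1,2,3), [α₁,β]=α₄, [α₁,α₂]=α₄, αᵖ=βᵖ=1, αⱼ^(p)=1.
-/

namespace Stmt6

/-- The additive group `ℚ/ℤ`. -/
abbrev QZ : Type := ℚ ⧸ AddSubgroup.zmultiples (1 : ℚ)

/-- An inhomogeneous 2-cocycle on `G` with values in `ℚ/ℤ` (trivial `G`-action). -/
def IsTwoCocycle {G : Type} [Group G] (f : G → G → QZ) : Prop :=
  ∀ g h j : G, f h j - f (g * h) j + f g (h * j) - f g h = 0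

/-- An inhomogeneous 2-coboundary on `G` with values in `ℚ/ℤ` (trivial `G`-action). -/
def IsTwoCoboundary {G : Type} [Group G] (f : G → G → QZ) : Prop :=
  ∃ c : G → QZ, ∀ g h : G, f g h = c h - c (g * h) + c g

/-- A subgroup is bicyclic if it is abelian and generated by at most two elements
(equivalently, cyclic or a direct product of two cyclic groups). -/
def IsBicyclic {G : Type} [Group G] (A : Subgroup G) : Prop :=
  (∀ x y : A, x * y = y * x) ∧ ∃ a b : G, A = Subgroup.closure {a, b}

/-- The Bogomolov multiplier `B₀(G) ⊆ H²(G, ℚ/ℤ)` is trivial, phrased at the level of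
2-cocycles: every 2-cocycle whose restriction to each bicyclic subgroup is a coboundary
(i.e. whose class restricts to zero on each bicyclic subgroup) is itself a coboundary
(i.e. its class is zero). -/
def BogomolovMultiplierIsTrivial (G : Type) [Group G] : Prop :=
  ∀ f : G → G → QZ, IsTwoCocycle f →
    (∀ A : Subgroup G, IsBicyclic A → IsTwoCoboundary (fun a b : ↥A => f ↑a ↑b)) →
    IsTwoCoboundary f

/-- The Bogomolov multiplier `B₀(G) ⊆ H²(G, ℚ/ℤ)` is nontrivial, phrased at the level of
2-cocycles. -/
def BogomolovMultiplierIsNontrivial (G : Type) [Group G] : Prop :=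
  ∃ f : G → G → QZ, IsTwoCocycle f ∧
    (∀ A : Subgroup G, IsBicyclic A → IsTwoCoboundary (fun a b : ↥A => f ↑a ↑b)) ∧
    ¬ IsTwoCoboundary f

/-- The generators. -/
inductive Gen | a | a1 | a2 | a3 | a4 | b

open FreeGroup

/-- The commutator `[x,y] = x⁻¹y⁻¹xy`. -/
def c (x y : FreeGroup Gen) : FreeGroup Gen := x⁻¹ * y⁻¹ * x * y

/-- The defining relators. -/
def rels (p : ℕ) : Set (FreeGroup Gen) :=
  { c (of .a1) (of .a) * (of Gen.a2)⁻¹,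
    c (of .a2) (of .a) * (of Gen.a3)⁻¹,
    c (of .a3) (of .a) * (of Gen.a4)⁻¹,
    c (of .a1) (of .b) * (of Gen.a4)⁻¹,
    c (of .a1) (of .a2) * (of Gen.a4)⁻¹,
    c (of .a) (of .a4),
    c (of .a) (of .b),
    c (of .a1) (of .a3),
    c (of .a1) (of .a4),
    c (of .a2) (of .a3),
    c (of .a2) (of .a4),
    c (of .a2) (of .b),
    c (of .a3) (of .a4),
    c (of .a3) (of .b),
    c (of .a4) (of .b),
    (of Gen.a) ^ p,
    (of Gen.b) ^ p,
    (of Gen.a1) ^ p * (of Gen.a2) ^ (p.choose 2) * (of Gen.a3) ^ (p.choose 3) * (of Gen.a4) ^ (p.choose 4),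
    (of Gen.a2) ^ p * (of Gen.a3) ^ (p.choose 2) * (of Gen.a4) ^ (p.choose 3),
    (of Gen.a3) ^ p * (of Gen.a4) ^ (p.choose 2),
    (of Gen.a4) ^ p }

lemma QZ.div (y : QZ) (n : ℕ) (hn : 0 < n) : ∃ t : QZ, n • t = y := by
  obtain ⟨q, rfl⟩ := QuotientAddGroup.mk_surjective y
  refine ⟨QuotientAddGroup.mk (q / n), ?_⟩
  rw [← QuotientAddGroup.mk_nsmul]
  congr 1
  have hn' : (n:ℚ) ≠ 0 := Nat.cast_ne_zero.mpr hn.ne'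
  rw [nsmul_eq_mul]
  field_simp

/-- bundled cocycle -/
structure Coc (G : Type) [Group G] where
  f : G → G → QZ
  hf : IsTwoCocycle f

variable {G : Type} [Group G]

lemma Coc.one_right (F : Coc G) (g : G) : F.f g 1 = F.f 1 1 := by
  have h := F.hf g 1 1
  simp at h
  exact (sub_eq_zero.mp h.symm.symm).symm

lemma Coc.one_left (F : Coc G) (g : G) : F.f 1 g = F.f 1 1 := by
  have h := F.hf 1 1 g
  simp at h
  exact sub_eq_zero.mp h

/-- the central extension -/
def Ext (_F : Coc G) : Type := G × QZ

namespace Ext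
variable {F : Coc G}

instance instGroup (F : Coc G) : Group (Ext F) where
  mul x y := (x.1 * y.1, x.2 + y.2 + F.f x.1 y.1)
  one := (1, -F.f 1 1)
  inv x := (x.1⁻¹, -x.2 - F.f x.1⁻¹ x.1 - F.f 1 1)
  mul_assoc x y z := by
    have h := F.hf x.1 y.1 z.1
    refine Prod.ext (mul_assoc _ _ _) ?_
    show x.2 + y.2 + F.f x.1 y.1 + z.2 + F.f (x.1 * y.1) z.1
       = x.2 + (y.2 + z.2 + F.f y.1 z.1) + F.f x.1 (y.1 * z.1)
    have h2 : F.f y.1 z.1 + F.f x.1 (y.1 * z.1) = F.f (x.1 * y.1) z.1 + F.f x.1 y.1 := by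
      have e : (F.f y.1 z.1 + F.f x.1 (y.1 * z.1)) - (F.f (x.1 * y.1) z.1 + F.f x.1 y.1)
          = F.f y.1 z.1 - F.f (x.1 * y.1) z.1 + F.f x.1 (y.1 * z.1) - F.f x.1 y.1 := by abel
      have := e.symm ▸ h
      exact sub_eq_zero.mp this
    calc x.2 + y.2 + F.f x.1 y.1 + z.2 + F.f (x.1 * y.1) z.1
        = x.2 + y.2 + z.2 + (F.f (x.1 * y.1) z.1 + F.f x.1 y.1) := by abel
      _ = x.2 + y.2 + z.2 + (F.f y.1 z.1 + F.f x.1 (y.1 * z.1)) := by rw [h2]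
      _ = x.2 + (y.2 + z.2 + F.f y.1 z.1) + F.f x.1 (y.1 * z.1) := by abel
  one_mul x := by
    refine Prod.ext (one_mul _) ?_
    show -F.f 1 1 + x.2 + F.f 1 x.1 = x.2
    rw [F.one_left x.1]; abel
  mul_one x := by
    refine Prod.ext (mul_one _) ?_
    show x.2 + -F.f 1 1 + F.f x.1 1 = x.2
    rw [F.one_right x.1]; abel
  inv_mul_cancel x := by
    refine Prod.ext (inv_mul_cancel _) ?_
    show -x.2 - F.f x.1⁻¹ x.1 - F.f 1 1 + x.2 + F.f x.1⁻¹ x.1 = -F.f 1 1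
    abel

/-- projection homomorphism -/
def proj (F : Coc G) : Ext F →* G :=
  { toFun := fun x => x.1, map_one' := rfl, map_mul' := fun _ _ => rfl }

/-- section (not a homomorphism) -/
def sec (F : Coc G) (g : G) : Ext F := (g, 0)

@[simp] lemma proj_sec (g : G) : proj F (sec F g) = g := rfl

@[simp] lemma mul_def (x y : Ext F) :
    x * y = (x.1 * y.1, x.2 + y.2 + F.f x.1 y.1) := rfl

@[simp] lemma one_def : (1 : Ext F) = ((1 : G), -F.f 1 1) := rfl

lemma central (z : Ext F) (hz : proj F z = 1) : ∀ w : Ext F, Commute z w := by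
  intro w
  have h1 : z.1 = 1 := hz
  unfold Commute SemiconjBy
  refine Prod.ext ?_ ?_
  · show z.1 * w.1 = w.1 * z.1
    rw [h1, one_mul, mul_one]
  · show z.2 + w.2 + F.f z.1 w.1 = w.2 + z.2 + F.f w.1 z.1
    rw [h1, F.one_left w.1, F.one_right w.1]; abel
end Ext

namespace Ext
variable {G : Type} [Group G] {F : Coc G}

/-- an element of the kernel of `proj` -/
def kerElt (F : Coc G) (t : QZ) : Ext F := ((1 : G), t)

@[simp] lemma kerElt_fst (t : QZ) : (kerElt F t).1 = 1 := rfl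
@[simp] lemma kerElt_snd (t : QZ) : (kerElt F t).2 = t := rfl

lemma pow_ker (t : QZ) (n : ℕ) :
    (kerElt F t) ^ (n + 1) = kerElt F ((n + 1) • t + n • F.f 1 1) := by
  induction n with
  | zero =>
    rw [zero_add, pow_one]
    refine Prod.ext rfl ?_
    show t = 1 • t + 0 • F.f 1 1
    simp
  | succ m ih =>
    rw [pow_succ, ih, mul_def]
    refine Prod.ext (by simp) ?_
    show (m + 1) • t + m • F.f 1 1 + t + F.f 1 1 = (m + 1 + 1) • t + (m + 1) • F.f 1 1
    rw [succ_nsmul t (m+1), succ_nsmul (F.f 1 1) m]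
    abel

/-- existence of n-th roots of kernel elements, inside the kernel -/
lemma root (w : Ext F) (hw : proj F w = 1) (n : ℕ) (hn : 0 < n) :
    ∃ z : Ext F, proj F z = 1 ∧ z ^ n = w := by
  obtain ⟨m, rfl⟩ := Nat.exists_eq_add_of_lt hn
  obtain ⟨t, ht⟩ := QZ.div (w.2 - m • F.f 1 1) (m + 1) (Nat.succ_pos m)
  refine ⟨kerElt F t, rfl, ?_⟩
  rw [zero_add, pow_ker]
  have h1 : w.1 = 1 := hw
  refine Prod.ext (by simp [h1.symm]) ?_
  show (m + 1) • t + m • F.f 1 1 = w.2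
  rw [ht]; abel

/-- a splitting homomorphism yields a coboundary -/
lemma coboundary_of_splitting (s : G →* Ext F) (hs : ∀ g, proj F (s g) = g) :
    IsTwoCoboundary F.f := by
  refine ⟨fun g => -(s g).2, fun g h => ?_⟩
  have h1 : (s g).1 = g := hs g
  have h2 : (s h).1 = h := hs h
  have hm : s g * s h = s (g * h) := (map_mul s g h).symm
  rw [mul_def] at hm
  have h3 := congrArg Prod.snd hm
  simp only at h3
  rw [h1, h2] at h3
  show F.f g h = -(s h).2 - -(s (g * h)).2 + -(s g).2
  rw [← h3]; abel

/-- commuting lifts from the bicyclic-splitting hypothesis -/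
lemma commuting_lifts
    (hbi : ∀ A : Subgroup G, IsBicyclic A →
      IsTwoCoboundary (fun a b : ↥A => F.f ↑a ↑b))
    (x y : Ext F) (hxy : (proj F x) * (proj F y) = (proj F y) * (proj F x)) :
    Commute x y := by
  set g := proj F x with hg
  set h := proj F y with hh
  set A : Subgroup G := Subgroup.closure {g, h} with hA
  have hgen : ({g, h} : Set G) ⊆ ↑(Subgroup.centralizer {g, h}) := by
    intro z hz
    rw [SetLike.mem_coe, Subgroup.mem_centralizer_iff]
    intro u hu
    rcases hz with rfl | hz
    · rcases hu with rfl | hu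
      · rfl
      · rw [Set.mem_singleton_iff] at hu; subst hu; exact hxy.symm
    · rw [Set.mem_singleton_iff] at hz; subst hz
      rcases hu with rfl | hu
      · exact hxy
      · rw [Set.mem_singleton_iff] at hu; subst hu; rfl
  have hAle : A ≤ Subgroup.centralizer {g, h} := (Subgroup.closure_le _).mpr hgen
  have hcomm : ∀ u v : A, u * v = v * u := by
    have hsub : ({g, h} : Set G) ⊆ ↑(Subgroup.centralizer (A : Set G)) := by
      intro z hz
      rw [SetLike.mem_coe, Subgroup.mem_centralizer_iff]
      intro u hu
      have h2 := hAle hu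
      rw [Subgroup.mem_centralizer_iff] at h2
      exact (h2 z hz).symm
    have hle2 : A ≤ Subgroup.centralizer (A : Set G) := (Subgroup.closure_le _).mpr hsub
    intro u v
    have h2 := hle2 u.2
    rw [Subgroup.mem_centralizer_iff] at h2
    have h3 := h2 (↑v) v.2
    exact Subtype.ext (by push_cast; exact h3.symm)
  obtain ⟨cc, hcc⟩ := hbi A ⟨hcomm, g, h, rfl⟩
  set sA : A → Ext F := fun u => ((u : G), -(cc u)) with hsA
  have hmul : ∀ u v : A, sA u * sA v = sA (u * v) := by
    intro u v
    rw [mul_def]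
    refine Prod.ext rfl ?_
    show -cc u + -cc v + F.f ↑u ↑v = -cc (u * v)
    have h4 : F.f ↑u ↑v = cc v - cc (u * v) + cc u := hcc u v
    rw [h4]; abel
  have hgA : g ∈ A := Subgroup.subset_closure (by left; rfl)
  have hhA : h ∈ A := Subgroup.subset_closure (by right; rfl)
  set xg : Ext F := sA ⟨g, hgA⟩ with hxg
  set yh : Ext F := sA ⟨h, hhA⟩ with hyh
  have hc : Commute xg yh := by
    show xg * yh = yh * xg
    rw [hxg, hyh, hmul, hmul]
    congr 1
    exact Subtype.ext hxy
  have hzx : proj F (xg⁻¹ * x) = 1 := by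
    have hpx : proj F xg = g := rfl
    rw [_root_.map_mul, _root_.map_inv, hpx, ← hg, inv_mul_cancel]
  have hzy : proj F (yh⁻¹ * y) = 1 := by
    have hpy : proj F yh = h := rfl
    rw [_root_.map_mul, _root_.map_inv, hpy, ← hh, inv_mul_cancel]
  have hx' : x = xg * (xg⁻¹ * x) := by group
  have hy' : y = yh * (yh⁻¹ * y) := by group
  rw [hx', hy']
  exact (hc.mul_right (central _ hzy xg).symm).mul_left (central _ hzx _) |>.symm.symm

end Ext


section GFacts

variable (p : ℕ)

/-- relators hold in the presented group -/
lemma rel_one {r : FreeGroup Gen} (hr : r ∈ rels p) :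
    PresentedGroup.mk (rels p) r = 1 := by
  exact (QuotientGroup.eq_one_iff r).2 (Subgroup.subset_normalClosure hr)

namespace PGen

def A : PresentedGroup (rels p) := .of .a
def A1 : PresentedGroup (rels p) := .of .a1
def A2 : PresentedGroup (rels p) := .of .a2
def A3 : PresentedGroup (rels p) := .of .a3
def A4 : PresentedGroup (rels p) := .of .a4
def B : PresentedGroup (rels p) := .of .b

/-- helper: turn a commutator relator into a `Commute` -/
lemma commute_of_rel {x y : Gen}
    (h : PresentedGroup.mk (rels p) (c (of x) (of y)) = 1) :
    Commute (PresentedGroup.of (rels := rels p) x) (PresentedGroup.of (rels := rels p) y) := by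
  set X := PresentedGroup.of (rels := rels p) x
  set Y := PresentedGroup.of (rels := rels p) y
  have h2 : X⁻¹ * Y⁻¹ * X * Y = 1 := by
    have h3 := h
    simp only [c, map_mul, map_inv] at h3
    exact h3
  show X * Y = Y * X
  calc X * Y = Y * X * (X⁻¹ * Y⁻¹ * X * Y) := by group
    _ = Y * X := by rw [h2, mul_one]

end PGen
namespace PGen
variable (p : ℕ)

lemma mem1 : (c (of .a1) (of .a) * (of Gen.a2)⁻¹) ∈ rels p := Set.mem_insert _ _

lemma mem2 : (c (of .a2) (of .a) * (of Gen.a3)⁻¹) ∈ rels p := Set.mem_insert_of_mem _ (Set.mem_insert _ _)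

lemma mem3 : (c (of .a3) (of .a) * (of Gen.a4)⁻¹) ∈ rels p := Set.mem_insert_of_mem _ (Set.mem_insert_of_mem _ (Set.mem_insert _ _))

lemma mem4 : (c (of .a1) (of .b) * (of Gen.a4)⁻¹) ∈ rels p := Set.mem_insert_of_mem _ (Set.mem_insert_of_mem _ (Set.mem_insert_of_mem _ (Set.mem_insert _ _)))

lemma mem5 : (c (of .a1) (of .a2) * (of Gen.a4)⁻¹) ∈ rels p := Set.mem_insert_of_mem _ (Set.mem_insert_of_mem _ (Set.mem_insert_of_mem _ (Set.mem_insert_of_mem _ (Set.mem_insert _ _))))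

lemma mem6 : (c (of .a) (of .a4)) ∈ rels p := Set.mem_insert_of_mem _ (Set.mem_insert_of_mem _ (Set.mem_insert_of_mem _ (Set.mem_insert_of_mem _ (Set.mem_insert_of_mem _ (Set.mem_insert _ _)))))

lemma mem7 : (c (of .a) (of .b)) ∈ rels p := Set.mem_insert_of_mem _ (Set.mem_insert_of_mem _ (Set.mem_insert_of_mem _ (Set.mem_insert_of_mem _ (Set.mem_insert_of_mem _ (Set.mem_insert_of_mem _ (Set.mem_insert _ _))))))

lemma mem8 : (c (of .a1) (of .a3)) ∈ rels p := Set.mem_insert_of_mem _ (Set.mem_insert_of_mem _ (Set.mem_insert_of_mem _ (Set.mem_insert_of_mem _ (Set.mem_insert_of_mem _ (Set.mem_insert_of_mem _ (Set.mem_insert_of_mem _ (Set.mem_insert _ _)))))))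

lemma mem9 : (c (of .a1) (of .a4)) ∈ rels p := Set.mem_insert_of_mem _ (Set.mem_insert_of_mem _ (Set.mem_insert_of_mem _ (Set.mem_insert_of_mem _ (Set.mem_insert_of_mem _ (Set.mem_insert_of_mem _ (Set.mem_insert_of_mem _ (Set.mem_insert_of_mem _ (Set.mem_insert _ _))))))))

lemma mem10 : (c (of .a2) (of .a3)) ∈ rels p := Set.mem_insert_of_mem _ (Set.mem_insert_of_mem _ (Set.mem_insert_of_mem _ (Set.mem_insert_of_mem _ (Set.mem_insert_of_mem _ (Set.mem_insert_of_mem _ (Set.mem_insert_of_mem _ (Set.mem_insert_of_mem _ (Set.mem_insert_of_mem _ (Set.mem_insert _ _)))))))))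

lemma mem11 : (c (of .a2) (of .a4)) ∈ rels p := Set.mem_insert_of_mem _ (Set.mem_insert_of_mem _ (Set.mem_insert_of_mem _ (Set.mem_insert_of_mem _ (Set.mem_insert_of_mem _ (Set.mem_insert_of_mem _ (Set.mem_insert_of_mem _ (Set.mem_insert_of_mem _ (Set.mem_insert_of_mem _ (Set.mem_insert_of_mem _ (Set.mem_insert _ _))))))))))

lemma mem12 : (c (of .a2) (of .b)) ∈ rels p := Set.mem_insert_of_mem _ (Set.mem_insert_of_mem _ (Set.mem_insert_of_mem _ (Set.mem_insert_of_mem _ (Set.mem_insert_of_mem _ (Set.mem_insert_of_mem _ (Set.mem_insert_of_mem _ (Set.mem_insert_of_mem _ (Set.mem_insert_of_mem _ (Set.mem_insert_of_mem _ (Set.mem_insert_of_mem _ (Set.mem_insert _ _)))))))))))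

lemma mem13 : (c (of .a3) (of .a4)) ∈ rels p := Set.mem_insert_of_mem _ (Set.mem_insert_of_mem _ (Set.mem_insert_of_mem _ (Set.mem_insert_of_mem _ (Set.mem_insert_of_mem _ (Set.mem_insert_of_mem _ (Set.mem_insert_of_mem _ (Set.mem_insert_of_mem _ (Set.mem_insert_of_mem _ (Set.mem_insert_of_mem _ (Set.mem_insert_of_mem _ (Set.mem_insert_of_mem _ (Set.mem_insert _ _))))))))))))

lemma mem14 : (c (of .a3) (of .b)) ∈ rels p := Set.mem_insert_of_mem _ (Set.mem_insert_of_mem _ (Set.mem_insert_of_mem _ (Set.mem_insert_of_mem _ (Set.mem_insert_of_mem _ (Set.mem_insert_of_mem _ (Set.mem_insert_of_mem _ (Set.mem_insert_of_mem _ (Set.mem_insert_of_mem _ (Set.mem_insert_of_mem _ (Set.mem_insert_of_mem _ (Set.mem_insert_of_mem _ (Set.mem_insert_of_mem _ (Set.mem_insert _ _)))))))))))))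

lemma mem15 : (c (of .a4) (of .b)) ∈ rels p := Set.mem_insert_of_mem _ (Set.mem_insert_of_mem _ (Set.mem_insert_of_mem _ (Set.mem_insert_of_mem _ (Set.mem_insert_of_mem _ (Set.mem_insert_of_mem _ (Set.mem_insert_of_mem _ (Set.mem_insert_of_mem _ (Set.mem_insert_of_mem _ (Set.mem_insert_of_mem _ (Set.mem_insert_of_mem _ (Set.mem_insert_of_mem _ (Set.mem_insert_of_mem _ (Set.mem_insert_of_mem _ (Set.mem_insert _ _))))))))))))))

lemma mem16 : ((of Gen.a) ^ p) ∈ rels p := Set.mem_insert_of_mem _ (Set.mem_insert_of_mem _ (Set.mem_insert_of_mem _ (Set.mem_insert_of_mem _ (Set.mem_insert_of_mem _ (Set.mem_insert_of_mem _ (Set.mem_insert_of_mem _ (Set.mem_insert_of_mem _ (Set.mem_insert_of_mem _ (Set.mem_insert_of_mem _ (Set.mem_insert_of_mem _ (Set.mem_insert_of_mem _ (Set.mem_insert_of_mem _ (Set.mem_insert_of_mem _ (Set.mem_insert_of_mem _ (Set.mem_insert _ _)))))))))))))))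

lemma mem17 : ((of Gen.b) ^ p) ∈ rels p := Set.mem_insert_of_mem _ (Set.mem_insert_of_mem _ (Set.mem_insert_of_mem _ (Set.mem_insert_of_mem _ (Set.mem_insert_of_mem _ (Set.mem_insert_of_mem _ (Set.mem_insert_of_mem _ (Set.mem_insert_of_mem _ (Set.mem_insert_of_mem _ (Set.mem_insert_of_mem _ (Set.mem_insert_of_mem _ (Set.mem_insert_of_mem _ (Set.mem_insert_of_mem _ (Set.mem_insert_of_mem _ (Set.mem_insert_of_mem _ (Set.mem_insert_of_mem _ (Set.mem_insert _ _))))))))))))))))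

lemma mem18 : ((of Gen.a1) ^ p * (of Gen.a2) ^ (p.choose 2) * (of Gen.a3) ^ (p.choose 3) * (of Gen.a4) ^ (p.choose 4)) ∈ rels p := Set.mem_insert_of_mem _ (Set.mem_insert_of_mem _ (Set.mem_insert_of_mem _ (Set.mem_insert_of_mem _ (Set.mem_insert_of_mem _ (Set.mem_insert_of_mem _ (Set.mem_insert_of_mem _ (Set.mem_insert_of_mem _ (Set.mem_insert_of_mem _ (Set.mem_insert_of_mem _ (Set.mem_insert_of_mem _ (Set.mem_insert_of_mem _ (Set.mem_insert_of_mem _ (Set.mem_insert_of_mem _ (Set.mem_insert_of_mem _ (Set.mem_insert_of_mem _ (Set.mem_insert_of_mem _ (Set.mem_insert _ _)))))))))))))))))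

lemma mem19 : ((of Gen.a2) ^ p * (of Gen.a3) ^ (p.choose 2) * (of Gen.a4) ^ (p.choose 3)) ∈ rels p := Set.mem_insert_of_mem _ (Set.mem_insert_of_mem _ (Set.mem_insert_of_mem _ (Set.mem_insert_of_mem _ (Set.mem_insert_of_mem _ (Set.mem_insert_of_mem _ (Set.mem_insert_of_mem _ (Set.mem_insert_of_mem _ (Set.mem_insert_of_mem _ (Set.mem_insert_of_mem _ (Set.mem_insert_of_mem _ (Set.mem_insert_of_mem _ (Set.mem_insert_of_mem _ (Set.mem_insert_of_mem _ (Set.mem_insert_of_mem _ (Set.mem_insert_of_mem _ (Set.mem_insert_of_mem _ (Set.mem_insert_of_mem _ (Set.mem_insert _ _))))))))))))))))))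

lemma mem20 : ((of Gen.a3) ^ p * (of Gen.a4) ^ (p.choose 2)) ∈ rels p := Set.mem_insert_of_mem _ (Set.mem_insert_of_mem _ (Set.mem_insert_of_mem _ (Set.mem_insert_of_mem _ (Set.mem_insert_of_mem _ (Set.mem_insert_of_mem _ (Set.mem_insert_of_mem _ (Set.mem_insert_of_mem _ (Set.mem_insert_of_mem _ (Set.mem_insert_of_mem _ (Set.mem_insert_of_mem _ (Set.mem_insert_of_mem _ (Set.mem_insert_of_mem _ (Set.mem_insert_of_mem _ (Set.mem_insert_of_mem _ (Set.mem_insert_of_mem _ (Set.mem_insert_of_mem _ (Set.mem_insert_of_mem _ (Set.mem_insert_of_mem _ (Set.mem_insert _ _)))))))))))))))))))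

lemma mem21 : ((of Gen.a4) ^ p) ∈ rels p := Set.mem_insert_of_mem _ (Set.mem_insert_of_mem _ (Set.mem_insert_of_mem _ (Set.mem_insert_of_mem _ (Set.mem_insert_of_mem _ (Set.mem_insert_of_mem _ (Set.mem_insert_of_mem _ (Set.mem_insert_of_mem _ (Set.mem_insert_of_mem _ (Set.mem_insert_of_mem _ (Set.mem_insert_of_mem _ (Set.mem_insert_of_mem _ (Set.mem_insert_of_mem _ (Set.mem_insert_of_mem _ (Set.mem_insert_of_mem _ (Set.mem_insert_of_mem _ (Set.mem_insert_of_mem _ (Set.mem_insert_of_mem _ (Set.mem_insert_of_mem _ (Set.mem_insert_of_mem _ (Set.mem_singleton _))))))))))))))))))))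


lemma hR1 : (A1 p)⁻¹ * (A p)⁻¹ * A1 p * A p = A2 p := by
  have h := rel_one p (mem1 p)
  simp only [c, map_mul, map_inv] at h
  exact mul_inv_eq_one.mp h

lemma hR2 : (A2 p)⁻¹ * (A p)⁻¹ * A2 p * A p = A3 p := by
  have h := rel_one p (mem2 p)
  simp only [c, map_mul, map_inv] at h
  exact mul_inv_eq_one.mp h

lemma hR3 : (A3 p)⁻¹ * (A p)⁻¹ * A3 p * A p = A4 p := by
  have h := rel_one p (mem3 p)
  simp only [c, map_mul, map_inv] at h
  exact mul_inv_eq_one.mp h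

lemma hR4 : (A1 p)⁻¹ * (B p)⁻¹ * A1 p * B p = A4 p := by
  have h := rel_one p (mem4 p)
  simp only [c, map_mul, map_inv] at h
  exact mul_inv_eq_one.mp h

lemma hR5 : (A1 p)⁻¹ * (A2 p)⁻¹ * A1 p * A2 p = A4 p := by
  have h := rel_one p (mem5 p)
  simp only [c, map_mul, map_inv] at h
  exact mul_inv_eq_one.mp h

lemma hC6 : Commute (A p) (A4 p) := commute_of_rel p (rel_one p (mem6 p))
lemma hC7 : Commute (A p) (B p) := commute_of_rel p (rel_one p (mem7 p))
lemma hC8 : Commute (A1 p) (A3 p) := commute_of_rel p (rel_one p (mem8 p))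
lemma hC9 : Commute (A1 p) (A4 p) := commute_of_rel p (rel_one p (mem9 p))
lemma hC10 : Commute (A2 p) (A3 p) := commute_of_rel p (rel_one p (mem10 p))
lemma hC11 : Commute (A2 p) (A4 p) := commute_of_rel p (rel_one p (mem11 p))
lemma hC12 : Commute (A2 p) (B p) := commute_of_rel p (rel_one p (mem12 p))
lemma hC13 : Commute (A3 p) (A4 p) := commute_of_rel p (rel_one p (mem13 p))
lemma hC14 : Commute (A3 p) (B p) := commute_of_rel p (rel_one p (mem14 p))
lemma hC15 : Commute (A4 p) (B p) := commute_of_rel p (rel_one p (mem15 p))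

lemma hR16 : (A p) ^ p = 1 := by
  have h := rel_one p (mem16 p)
  rwa [map_pow] at h

lemma hR17 : (B p) ^ p = 1 := by
  have h := rel_one p (mem17 p)
  rwa [map_pow] at h

lemma hR18 : (A1 p) ^ p * (A2 p) ^ (p.choose 2) * (A3 p) ^ (p.choose 3) * (A4 p) ^ (p.choose 4) = 1 := by
  have h := rel_one p (mem18 p)
  simp only [_root_.map_mul, _root_.map_pow] at h
  exact h

lemma hR19 : (A2 p) ^ p * (A3 p) ^ (p.choose 2) * (A4 p) ^ (p.choose 3) = 1 := by
  have h := rel_one p (mem19 p)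
  simp only [_root_.map_mul, _root_.map_pow] at h
  exact h

lemma hR20 : (A3 p) ^ p * (A4 p) ^ (p.choose 2) = 1 := by
  have h := rel_one p (mem20 p)
  simp only [_root_.map_mul, _root_.map_pow] at h
  exact h

lemma hR21 : (A4 p) ^ p = 1 := by
  have h := rel_one p (mem21 p)
  rwa [map_pow] at h

/-- `a₄` is central in `G` -/
lemma hZ4 : ∀ g : PresentedGroup (rels p), Commute (A4 p) g := by
  intro g
  induction g with
  | _ w =>
    induction w with
    | C1 => simp [Commute.one_right]
    | of x =>
      cases x with
      | a => exact (hC6 p).symm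
      | a1 => exact (hC9 p).symm
      | a2 => exact (hC11 p).symm
      | a3 => exact (hC13 p).symm
      | a4 => exact Commute.refl _
      | b => exact hC15 p
    | inv_of x hx => exact hx.inv_right
    | mul x y hx hy =>
      rw [show (PresentedGroup.mk (rels p)) (x * y)
          = PresentedGroup.mk (rels p) x * PresentedGroup.mk (rels p) y from map_mul _ _ _]
      exact hx.mul_right hy
end PGen


namespace PGen
variable (p : ℕ)

/-- swap form of R1 -/
lemma w1 : A1 p * A p = A p * (A1 p * A2 p) := by
  rw [← hR1 p]; group

lemma w3 : A3 p * A p = A p * (A3 p * A4 p) := by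
  rw [← hR3 p]; group

lemma w4 : A1 p * B p = B p * (A1 p * A4 p) := by
  rw [← hR4 p]; group

lemma w5 : A1 p * A2 p = A2 p * (A1 p * A4 p) := by
  rw [← hR5 p]; group

lemma e1 : (B p)⁻¹ * A1 p = A1 p * (A4 p * (B p)⁻¹) := by
  calc (B p)⁻¹ * A1 p = (B p)⁻¹ * (A1 p * B p) * (B p)⁻¹ := by group
    _ = (B p)⁻¹ * (B p * (A1 p * A4 p)) * (B p)⁻¹ := by rw [w4]
    _ = A1 p * (A4 p * (B p)⁻¹) := by group

lemma e2 : A2 p * A1 p = (A1 p * A2 p) * (A4 p)⁻¹ := by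
  calc A2 p * A1 p = A2 p * (A1 p * A4 p) * (A4 p)⁻¹ := by group
    _ = (A1 p * A2 p) * (A4 p)⁻¹ := by rw [← w5]

lemma e3 : A3 p * (A p)⁻¹ = (A p)⁻¹ * (A3 p * (A4 p)⁻¹) := by
  have h1 : A p * A3 p = (A3 p * A p) * (A4 p)⁻¹ := by
    calc A p * A3 p = A p * (A3 p * A4 p) * (A4 p)⁻¹ := by group
      _ = (A3 p * A p) * (A4 p)⁻¹ := by rw [← w3]
  calc A3 p * (A p)⁻¹ = (A p)⁻¹ * (A p * A3 p) * (A p)⁻¹ := by group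
    _ = (A p)⁻¹ * ((A3 p * A p) * (A4 p)⁻¹) * (A p)⁻¹ := by rw [h1]
    _ = (A p)⁻¹ * (A3 p * (A p * ((A4 p)⁻¹ * (A p)⁻¹))) := by group
    _ = (A p)⁻¹ * (A3 p * (A p * ((A p)⁻¹ * (A4 p)⁻¹))) := by
        rw [((hZ4 p ((A p)⁻¹)).inv_left.eq)]
    _ = (A p)⁻¹ * (A3 p * (A4 p)⁻¹) := by group

lemma GC2 : A1 p * (A2 p * (B p)⁻¹) = (A2 p * (B p)⁻¹) * A1 p := by
  calc A1 p * (A2 p * (B p)⁻¹)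
      = (A1 p * A2 p) * (B p)⁻¹ := by group
    _ = (A2 p * (B p)⁻¹) * A1 p := by
        calc (A1 p * A2 p) * (B p)⁻¹
            = (A2 p * A1 p * (A4 p)) * (B p)⁻¹ := by
              rw [show A2 p * A1 p * A4 p = A1 p * A2 p from by
                rw [e2]; group]
          _ = A2 p * (A1 p * (A4 p * (B p)⁻¹)) := by group
          _ = A2 p * ((B p)⁻¹ * A1 p) := by rw [← e1]
          _ = (A2 p * (B p)⁻¹) * A1 p := by group

lemma GC1 : ((A p)⁻¹ * A1 p) * (A3 p * (B p)⁻¹)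
    = (A3 p * (B p)⁻¹) * ((A p)⁻¹ * A1 p) := by
  have e4 : (B p)⁻¹ * (A p)⁻¹ = (A p)⁻¹ * (B p)⁻¹ := by
    have h := (hC7 p).inv_left.inv_right
    exact h.eq.symm
  calc ((A p)⁻¹ * A1 p) * (A3 p * (B p)⁻¹)
      = (A p)⁻¹ * (A1 p * A3 p) * (B p)⁻¹ := by group
    _ = (A p)⁻¹ * (A3 p * A1 p) * (B p)⁻¹ := by rw [(hC8 p).eq]
    _ = (A3 p * (B p)⁻¹) * ((A p)⁻¹ * A1 p) := by
        calc (A p)⁻¹ * (A3 p * A1 p) * (B p)⁻¹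
            = (A p)⁻¹ * (A3 p * ((A4 p)⁻¹ * (A4 p * (A1 p * (B p)⁻¹)))) := by group
          _ = (A p)⁻¹ * (A3 p * ((A4 p)⁻¹ * (A1 p * (A4 p * (B p)⁻¹)))) := by
              rw [show A4 p * (A1 p * (B p)⁻¹) = A1 p * (A4 p * (B p)⁻¹) from by
                rw [show A4 p * (A1 p * (B p)⁻¹) = (A4 p * A1 p) * (B p)⁻¹ from by group,
                  (hZ4 p (A1 p)).eq]; group]
          _ = (A p)⁻¹ * (A3 p * ((A4 p)⁻¹ * ((B p)⁻¹ * A1 p))) := by rw [← e1]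
          _ = ((A p)⁻¹ * (A3 p * (A4 p)⁻¹)) * ((B p)⁻¹ * A1 p) := by group
          _ = (A3 p * (A p)⁻¹) * ((B p)⁻¹ * A1 p) := by rw [← e3]
          _ = A3 p * ((A p)⁻¹ * (B p)⁻¹) * A1 p := by group
          _ = A3 p * ((B p)⁻¹ * (A p)⁻¹) * A1 p := by rw [e4]
          _ = (A3 p * (B p)⁻¹) * ((A p)⁻¹ * A1 p) := by group

end PGen

/-- commutator unchanged when left argument is multiplied by a central element -/
lemma comm_central_left {H : Type} [Group H] (x y z : H) (hz : ∀ w, z * w = w * z) :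
    (x * z)⁻¹ * y⁻¹ * (x * z) * y = x⁻¹ * y⁻¹ * x * y := by
  calc (x * z)⁻¹ * y⁻¹ * (x * z) * y
      = z⁻¹ * (x⁻¹ * (y⁻¹ * (x * (z * y)))) := by group
    _ = z⁻¹ * (x⁻¹ * (y⁻¹ * (x * (y * z)))) := by rw [hz y]
    _ = z⁻¹ * ((x⁻¹ * (y⁻¹ * (x * y))) * z) := by group
    _ = z⁻¹ * (z * (x⁻¹ * (y⁻¹ * (x * y)))) := by
        rw [← hz (x⁻¹ * (y⁻¹ * (x * y)))]
    _ = x⁻¹ * y⁻¹ * x * y := by group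

/-- commutator unchanged when right argument is multiplied by a central element -/
lemma comm_central_right {H : Type} [Group H] (x y z : H) (hz : ∀ w, z * w = w * z) :
    x⁻¹ * (y * z)⁻¹ * x * (y * z) = x⁻¹ * y⁻¹ * x * y := by
  calc x⁻¹ * (y * z)⁻¹ * x * (y * z)
      = x⁻¹ * (z⁻¹ * ((y⁻¹ * (x * y)) * z)) := by group
    _ = x⁻¹ * (z⁻¹ * (z * (y⁻¹ * (x * y)))) := by
        rw [← hz (y⁻¹ * (x * y))]
    _ = x⁻¹ * y⁻¹ * x * y := by group

/-- turn a `Commute` into a trivial commutator relation -/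
lemma comm_to_rel {H : Type} [Group H] {X Y : H} (h : X * Y = Y * X) :
    X⁻¹ * Y⁻¹ * X * Y = 1 := by
  calc X⁻¹ * Y⁻¹ * X * Y = X⁻¹ * Y⁻¹ * (X * Y) := by group
    _ = X⁻¹ * Y⁻¹ * (Y * X) := by rw [h]
    _ = 1 := by group

end GFacts



set_option maxHeartbeats 2000000 in
theorem bogomolov_trivial_Phi27 (p : ℕ) (hp : p.Prime) (h3 : 3 < p)
    (hcard : Nat.card (PresentedGroup (rels p)) = p ^ 6) :
    BogomolovMultiplierIsTrivial (PresentedGroup (rels p)) := by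
  clear h3 hcard
  intro f hf hbi
  set F : Coc (PresentedGroup (rels p)) := ⟨f, hf⟩ with hF
  -- commuting-pair principle
  have cp : ∀ x y : Ext F, Ext.proj F x * Ext.proj F y = Ext.proj F y * Ext.proj F x →
      x * y = y * x := fun x y h => Ext.commuting_lifts hbi x y h
  have hcent : ∀ z : Ext F, Ext.proj F z = 1 → ∀ w : Ext F, z * w = w * z :=
    fun z hz w => Ext.central z hz w
  -- generators of G
  set a := PGen.A p with hadef
  set a1 := PGen.A1 p with ha1def
  set a2 := PGen.A2 p with ha2def
  set a3 := PGen.A3 p with ha3def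
  set a4 := PGen.A4 p with ha4def
  set bb := PGen.B p with hbbdef
  -- canonical lifts
  set TA : Ext F := Ext.sec F a with hTA
  set T1 : Ext F := Ext.sec F a1 with hT1
  set TB : Ext F := Ext.sec F bb with hTB
  have hprTA : Ext.proj F TA = a := rfl
  have hprT1 : Ext.proj F T1 = a1 := rfl
  have hprTB : Ext.proj F TB = bb := rfl
  -- adjusted lift of a, with p-th power 1
  have hkerA : Ext.proj F ((TA ^ p)⁻¹) = 1 := by
    rw [_root_.map_inv, _root_.map_pow, hprTA, PGen.hR16 p, inv_one]
  obtain ⟨za, hza, hzap⟩ := Ext.root ((TA ^ p)⁻¹) hkerA p hp.pos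
  set Ah := TA * za with hAh
  have hprAh : Ext.proj F Ah = a := by
    rw [hAh, _root_.map_mul, hza, hprTA, mul_one]
  have hApow : Ah ^ p = 1 := by
    rw [hAh, (show Commute za TA from hcent za hza TA).symm.mul_pow, hzap, mul_inv_cancel]
  -- the derived generators
  set x2 : Ext F := T1⁻¹ * Ah⁻¹ * T1 * Ah with hx2
  set x3 : Ext F := x2⁻¹ * Ah⁻¹ * x2 * Ah with hx3
  set x4 : Ext F := x3⁻¹ * Ah⁻¹ * x3 * Ah with hx4
  have hprx2 : Ext.proj F x2 = a2 := by
    rw [hx2]; simp only [_root_.map_mul, _root_.map_inv, hprAh, hprT1]; exact PGen.hR1 p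
  have hprx3 : Ext.proj F x3 = a3 := by
    rw [hx3]; simp only [_root_.map_mul, _root_.map_inv, hprAh, hprx2]; exact PGen.hR2 p
  have hprx4 : Ext.proj F x4 = a4 := by
    rw [hx4]; simp only [_root_.map_mul, _root_.map_inv, hprAh, hprx3]; exact PGen.hR3 p
  set ν : Ext F := T1⁻¹ * TB⁻¹ * T1 * TB with hnu
  set μ : Ext F := T1⁻¹ * x2⁻¹ * T1 * x2 with hmu
  have hprν : Ext.proj F ν = a4 := by
    rw [hnu]; simp only [_root_.map_mul, _root_.map_inv, hprT1, hprTB]; exact PGen.hR4 p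
  have hprμ : Ext.proj F μ = a4 := by
    rw [hmu]; simp only [_root_.map_mul, _root_.map_inv, hprT1, hprx2]; exact PGen.hR5 p
  -- centrality of lifts of a4
  have hc4 : ∀ w : Ext F, x4 * w = w * x4 := fun w =>
    cp x4 w (by rw [hprx4]; exact PGen.hZ4 p _)
  have hcν : ∀ w : Ext F, ν * w = w * ν := fun w =>
    cp ν w (by rw [hprν]; exact PGen.hZ4 p _)
  -- commuting pairs among the lifts
  have hAB : Ah * TB = TB * Ah :=
    cp _ _ (by rw [hprAh, hprTB]; exact PGen.hC7 p)
  have h13 : T1 * x3 = x3 * T1 :=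
    cp _ _ (by rw [hprT1, hprx3]; exact PGen.hC8 p)
  have h23 : x2 * x3 = x3 * x2 :=
    cp _ _ (by rw [hprx2, hprx3]; exact PGen.hC10 p)
  -- swap identities (definitional)
  have sw1 : T1 * Ah = Ah * (T1 * x2) := by rw [hx2]; group
  have sw2 : x2 * Ah = Ah * (x2 * x3) := by rw [hx3]; group
  have sw3 : x3 * Ah = Ah * (x3 * x4) := by rw [hx4]; group
  -- power-commutation helpers
  have hc4A : ∀ n : ℕ, x4 ^ n * Ah = Ah * x4 ^ n := fun n =>
    ((show Commute x4 Ah from hc4 Ah).pow_left n).eq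
  have hc43 : ∀ n : ℕ, x4 ^ n * x3 = x3 * x4 ^ n := fun n =>
    ((show Commute x4 x3 from hc4 x3).pow_left n).eq
  have hc32 : ∀ n : ℕ, x3 ^ n * x2 = x2 * x3 ^ n := fun n =>
    (((show Commute x2 x3 from h23).pow_right n).eq).symm
  -- conjugation of x3-powers by Ah
  have m23 : ∀ n : ℕ, x3 ^ n * Ah = Ah * (x3 ^ n * x4 ^ n) := by
    intro n; induction n with
    | zero => simp only [pow_zero, one_mul, mul_one]
    | succ n ih =>
      calc x3 ^ (n+1) * Ah = x3 ^ n * (x3 * Ah) := by rw [pow_succ]; group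
        _ = x3 ^ n * (Ah * (x3 * x4)) := by rw [sw3]
        _ = (x3 ^ n * Ah) * (x3 * x4) := by group
        _ = (Ah * (x3 ^ n * x4 ^ n)) * (x3 * x4) := by rw [ih]
        _ = Ah * (x3 ^ n * ((x4 ^ n * x3) * x4)) := by group
        _ = Ah * (x3 ^ n * ((x3 * x4 ^ n) * x4)) := by rw [hc43 n]
        _ = Ah * (x3 ^ (n+1) * x4 ^ (n+1)) := by rw [pow_succ, pow_succ]; group
  -- conjugation of x2-powers by Ah
  have m12 : ∀ n : ℕ, x2 ^ n * Ah = Ah * (x2 ^ n * x3 ^ n) := by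
    intro n; induction n with
    | zero => simp only [pow_zero, one_mul, mul_one]
    | succ n ih =>
      calc x2 ^ (n+1) * Ah = x2 ^ n * (x2 * Ah) := by rw [pow_succ]; group
        _ = x2 ^ n * (Ah * (x2 * x3)) := by rw [sw2]
        _ = (x2 ^ n * Ah) * (x2 * x3) := by group
        _ = (Ah * (x2 ^ n * x3 ^ n)) * (x2 * x3) := by rw [ih]
        _ = Ah * (x2 ^ n * ((x3 ^ n * x2) * x3)) := by group
        _ = Ah * (x2 ^ n * ((x2 * x3 ^ n) * x3)) := by rw [hc32 n]
        _ = Ah * (x2 ^ (n+1) * x3 ^ (n+1)) := by rw [pow_succ, pow_succ]; group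
  -- main conjugation by powers of Ah
  have pl3 : ∀ n : ℕ, x3 * Ah ^ n = Ah ^ n * (x3 * x4 ^ n) := by
    intro n; induction n with
    | zero => simp only [pow_zero, one_mul, mul_one]
    | succ n ih =>
      calc x3 * Ah ^ (n+1) = (x3 * Ah ^ n) * Ah := by rw [pow_succ]; group
        _ = (Ah ^ n * (x3 * x4 ^ n)) * Ah := by rw [ih]
        _ = Ah ^ n * (x3 * (x4 ^ n * Ah)) := by group
        _ = Ah ^ n * (x3 * (Ah * x4 ^ n)) := by rw [hc4A n]
        _ = Ah ^ n * ((x3 * Ah) * x4 ^ n) := by group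
        _ = Ah ^ n * ((Ah * (x3 * x4)) * x4 ^ n) := by rw [sw3]
        _ = Ah ^ (n+1) * (x3 * x4 ^ (n+1)) := by rw [pow_succ, pow_succ]; group
  have px4 : x4 ^ p = 1 := by
    have h := pl3 p
    rw [hApow, one_mul, mul_one] at h
    exact (left_eq_mul.mp h)
  have pl2 : ∀ n : ℕ, x2 * Ah ^ n = Ah ^ n * (x2 * (x3 ^ n * x4 ^ (n.choose 2))) := by
    intro n; induction n with
    | zero =>
      rw [show Nat.choose 0 2 = 0 from rfl]
      simp only [pow_zero, one_mul, mul_one]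
    | succ n ih =>
      calc x2 * Ah ^ (n+1) = (x2 * Ah ^ n) * Ah := by rw [pow_succ]; group
        _ = (Ah ^ n * (x2 * (x3 ^ n * x4 ^ (n.choose 2)))) * Ah := by rw [ih]
        _ = Ah ^ n * (x2 * (x3 ^ n * (x4 ^ (n.choose 2) * Ah))) := by group
        _ = Ah ^ n * (x2 * (x3 ^ n * (Ah * x4 ^ (n.choose 2)))) := by rw [hc4A _]
        _ = Ah ^ n * (x2 * ((x3 ^ n * Ah) * x4 ^ (n.choose 2))) := by group
        _ = Ah ^ n * (x2 * ((Ah * (x3 ^ n * x4 ^ n)) * x4 ^ (n.choose 2))) := by rw [m23 n]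
        _ = Ah ^ n * ((x2 * Ah) * (x3 ^ n * (x4 ^ n * x4 ^ (n.choose 2)))) := by group
        _ = Ah ^ n * ((Ah * (x2 * x3)) * (x3 ^ n * (x4 ^ n * x4 ^ (n.choose 2)))) := by rw [sw2]
        _ = Ah ^ (n+1) * (x2 * (x3 ^ (n+1) * x4 ^ ((n+1).choose 2))) := by
            rw [show (n+1).choose 2 = n + n.choose 2 from by
                rw [Nat.choose_succ_succ n 1, Nat.choose_one_right],
              pow_succ, pow_succ, pow_add]
            group
  have px3 : x3 ^ p * x4 ^ (p.choose 2) = 1 := by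
    have h := pl2 p
    rw [hApow, one_mul, mul_one] at h
    exact (left_eq_mul.mp h)
  have pl1 : ∀ n : ℕ, T1 * Ah ^ n
      = Ah ^ n * (T1 * (x2 ^ n * (x3 ^ (n.choose 2) * x4 ^ (n.choose 3)))) := by
    intro n; induction n with
    | zero =>
      rw [show Nat.choose 0 2 = 0 from rfl, show Nat.choose 0 3 = 0 from rfl]
      simp only [pow_zero, one_mul, mul_one]
    | succ n ih =>
      calc T1 * Ah ^ (n+1) = (T1 * Ah ^ n) * Ah := by rw [pow_succ]; group
        _ = (Ah ^ n * (T1 * (x2 ^ n * (x3 ^ (n.choose 2) * x4 ^ (n.choose 3))))) * Ah := by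
            rw [ih]
        _ = Ah ^ n * (T1 * (x2 ^ n * (x3 ^ (n.choose 2) * (x4 ^ (n.choose 3) * Ah)))) := by
            group
        _ = Ah ^ n * (T1 * (x2 ^ n * (x3 ^ (n.choose 2) * (Ah * x4 ^ (n.choose 3))))) := by
            rw [hc4A _]
        _ = Ah ^ n * (T1 * (x2 ^ n * ((x3 ^ (n.choose 2) * Ah) * x4 ^ (n.choose 3)))) := by
            group
        _ = Ah ^ n * (T1 * (x2 ^ n * ((Ah * (x3 ^ (n.choose 2) * x4 ^ (n.choose 2)))
              * x4 ^ (n.choose 3)))) := by rw [m23 _]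
        _ = Ah ^ n * (T1 * ((x2 ^ n * Ah) * (x3 ^ (n.choose 2)
              * (x4 ^ (n.choose 2) * x4 ^ (n.choose 3))))) := by group
        _ = Ah ^ n * (T1 * ((Ah * (x2 ^ n * x3 ^ n)) * (x3 ^ (n.choose 2)
              * (x4 ^ (n.choose 2) * x4 ^ (n.choose 3))))) := by rw [m12 n]
        _ = Ah ^ n * ((T1 * Ah) * (x2 ^ n * (x3 ^ n * (x3 ^ (n.choose 2)
              * (x4 ^ (n.choose 2) * x4 ^ (n.choose 3)))))) := by group
        _ = Ah ^ n * ((Ah * (T1 * x2)) * (x2 ^ n * (x3 ^ n * (x3 ^ (n.choose 2)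
              * (x4 ^ (n.choose 2) * x4 ^ (n.choose 3)))))) := by rw [sw1]
        _ = Ah ^ (n+1) * (T1 * (x2 ^ (n+1) * (x3 ^ ((n+1).choose 2)
              * x4 ^ ((n+1).choose 3)))) := by
            rw [show (n+1).choose 2 = n + n.choose 2 from by
                rw [Nat.choose_succ_succ n 1, Nat.choose_one_right],
              show (n+1).choose 3 = n.choose 2 + n.choose 3 from
                Nat.choose_succ_succ n 2,
              pow_succ, pow_succ, pow_add, pow_add]
            group
  have px2 : x2 ^ p * (x3 ^ (p.choose 2) * x4 ^ (p.choose 3)) = 1 := by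
    have h := pl1 p
    rw [hApow, one_mul, mul_one] at h
    exact (left_eq_mul.mp h)
  -- adjusted lift of b
  have hkerB : Ext.proj F ((TB ^ p)⁻¹) = 1 := by
    rw [_root_.map_inv, _root_.map_pow, hprTB, PGen.hR17 p, inv_one]
  obtain ⟨zb, hzb, hzbp⟩ := Ext.root ((TB ^ p)⁻¹) hkerB p hp.pos
  set Bh := TB * zb with hBh
  have hprBh : Ext.proj F Bh = bb := by rw [hBh, _root_.map_mul, hzb, hprTB, mul_one]
  have hBpow : Bh ^ p = 1 := by
    rw [hBh, (show Commute zb TB from hcent zb hzb TB).symm.mul_pow, hzbp, mul_inv_cancel]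
  -- adjusted lift of a1
  set W : Ext F := T1 ^ p * x2 ^ (p.choose 2) * x3 ^ (p.choose 3) * x4 ^ (p.choose 4) with hW
  have hkerW : Ext.proj F W⁻¹ = 1 := by
    rw [hW, _root_.map_inv]
    simp only [_root_.map_mul, _root_.map_pow, hprT1, hprx2, hprx3, hprx4]
    rw [PGen.hR18 p, inv_one]
  obtain ⟨z1, hz1, hz1p⟩ := Ext.root W⁻¹ hkerW p hp.pos
  set A1h := T1 * z1 with hA1h
  have hprA1h : Ext.proj F A1h = a1 := by rw [hA1h, _root_.map_mul, hz1, hprT1, mul_one]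
  have hO18 : A1h ^ p * x2 ^ (p.choose 2) * x3 ^ (p.choose 3) * x4 ^ (p.choose 4) = 1 := by
    have h1 : A1h ^ p = T1 ^ p * z1 ^ p := by
      rw [hA1h, (show Commute z1 T1 from hcent z1 hz1 T1).symm.mul_pow]
    have hz1pc : z1 ^ p * (x2 ^ (p.choose 2) * (x3 ^ (p.choose 3) * x4 ^ (p.choose 4)))
        = (x2 ^ (p.choose 2) * (x3 ^ (p.choose 3) * x4 ^ (p.choose 4))) * z1 ^ p :=
      ((show Commute z1 _ from hcent z1 hz1 _).pow_left p).eq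
    calc A1h ^ p * x2 ^ (p.choose 2) * x3 ^ (p.choose 3) * x4 ^ (p.choose 4)
        = T1 ^ p * (z1 ^ p * (x2 ^ (p.choose 2) * (x3 ^ (p.choose 3)
            * x4 ^ (p.choose 4)))) := by rw [h1]; group
      _ = T1 ^ p * ((x2 ^ (p.choose 2) * (x3 ^ (p.choose 3) * x4 ^ (p.choose 4)))
            * z1 ^ p) := by rw [hz1pc]
      _ = W * z1 ^ p := by rw [hW]; group
      _ = 1 := by rw [hz1p]; group
  -- the two key commuting-pair identities
  have eA : TB⁻¹ * Ah⁻¹ = Ah⁻¹ * TB⁻¹ := ((show Commute Ah TB from hAB).inv_left.inv_right.eq).symm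
  have eB : TB⁻¹ * T1 = T1 * (ν * TB⁻¹) := by rw [hnu]; group
  have eC : x3 * Ah⁻¹ = Ah⁻¹ * (x3 * x4⁻¹) := by
    have h1 : Ah * x3 = (x3 * Ah) * x4⁻¹ := by rw [sw3]; group
    have h2 : x4⁻¹ * Ah⁻¹ = Ah⁻¹ * x4⁻¹ := ((show Commute x4 Ah⁻¹ from hc4 Ah⁻¹).inv_left.eq)
    calc x3 * Ah⁻¹ = Ah⁻¹ * ((Ah * x3) * Ah⁻¹) := by group
      _ = Ah⁻¹ * (((x3 * Ah) * x4⁻¹) * Ah⁻¹) := by rw [h1]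
      _ = Ah⁻¹ * (x3 * (Ah * (x4⁻¹ * Ah⁻¹))) := by group
      _ = Ah⁻¹ * (x3 * (Ah * (Ah⁻¹ * x4⁻¹))) := by rw [h2]
      _ = Ah⁻¹ * (x3 * x4⁻¹) := by group
  have eE : x4⁻¹ * T1 = T1 * x4⁻¹ := ((show Commute x4 T1 from hc4 T1).inv_left.eq)
  have hcp1 : (Ah⁻¹ * T1) * (x3 * TB⁻¹) = (x3 * TB⁻¹) * (Ah⁻¹ * T1) :=
    cp _ _ (by
      simp only [_root_.map_mul, _root_.map_inv, hprAh, hprT1, hprx3, hprTB]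
      exact PGen.GC1 p)
  have stepO4 : x4 = ν := by
    have key : (Ah⁻¹ * T1) * (x3 * TB⁻¹)
        = (Ah⁻¹ * T1) * (x3 * (x4⁻¹ * (ν * TB⁻¹))) := by
      calc (Ah⁻¹ * T1) * (x3 * TB⁻¹)
          = (x3 * TB⁻¹) * (Ah⁻¹ * T1) := hcp1
        _ = x3 * ((TB⁻¹ * Ah⁻¹) * T1) := by group
        _ = x3 * ((Ah⁻¹ * TB⁻¹) * T1) := by rw [eA]
        _ = (x3 * Ah⁻¹) * (TB⁻¹ * T1) := by group
        _ = (Ah⁻¹ * (x3 * x4⁻¹)) * (TB⁻¹ * T1) := by rw [eC]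
        _ = (Ah⁻¹ * (x3 * x4⁻¹)) * (T1 * (ν * TB⁻¹)) := by rw [eB]
        _ = Ah⁻¹ * (x3 * ((x4⁻¹ * T1) * (ν * TB⁻¹))) := by group
        _ = Ah⁻¹ * (x3 * ((T1 * x4⁻¹) * (ν * TB⁻¹))) := by rw [eE]
        _ = Ah⁻¹ * ((x3 * T1) * (x4⁻¹ * (ν * TB⁻¹))) := by group
        _ = Ah⁻¹ * ((T1 * x3) * (x4⁻¹ * (ν * TB⁻¹))) := by rw [← h13]
        _ = (Ah⁻¹ * T1) * (x3 * (x4⁻¹ * (ν * TB⁻¹))) := by group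
    have k2 := mul_left_cancel key
    have k3 := mul_left_cancel k2
    have k4 : x4 * TB⁻¹ = ν * TB⁻¹ := by
      conv_lhs => rw [k3]
      group
    exact mul_right_cancel k4
  have hcp2 : T1 * (x2 * TB⁻¹) = (x2 * TB⁻¹) * T1 :=
    cp _ _ (by
      simp only [_root_.map_mul, _root_.map_inv, hprT1, hprx2, hprTB]
      exact PGen.GC2 p)
  have eF : x2 * T1 = T1 * (x2 * μ⁻¹) := by rw [hmu]; group
  have stepO5 : μ = ν := by
    have key : T1 * (x2 * TB⁻¹) = T1 * (x2 * (μ⁻¹ * (ν * TB⁻¹))) := by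
      calc T1 * (x2 * TB⁻¹) = (x2 * TB⁻¹) * T1 := hcp2
        _ = x2 * (TB⁻¹ * T1) := by group
        _ = x2 * (T1 * (ν * TB⁻¹)) := by rw [eB]
        _ = (x2 * T1) * (ν * TB⁻¹) := by group
        _ = (T1 * (x2 * μ⁻¹)) * (ν * TB⁻¹) := by rw [eF]
        _ = T1 * (x2 * (μ⁻¹ * (ν * TB⁻¹))) := by group
    have k2 := mul_left_cancel key
    have k3 := mul_left_cancel k2
    have k4 : μ * TB⁻¹ = ν * TB⁻¹ := by
      conv_lhs => rw [k3]
      group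
    exact mul_right_cancel k4
  have hμ4 : μ = x4 := stepO5.trans stepO4.symm
  -- the lifting map on generators
  set xmap : Gen → Ext F := fun g => match g with
    | .a => Ah
    | .a1 => A1h
    | .a2 => x2
    | .a3 => x3
    | .a4 => x4
    | .b => Bh
    with hxmap
  have hz1c : ∀ w : Ext F, z1 * w = w * z1 := fun w => hcent z1 hz1 w
  have hzbc : ∀ w : Ext F, zb * w = w * zb := fun w => hcent zb hzb w
  have hA1comm : A1h⁻¹ * Ah⁻¹ * A1h * Ah = x2 := by
    rw [hA1h, comm_central_left T1 Ah z1 hz1c, hx2]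
  have hA1x2comm : A1h⁻¹ * x2⁻¹ * A1h * x2 = μ := by
    rw [hA1h, comm_central_left T1 x2 z1 hz1c, hmu]
  have hA1Bcomm : A1h⁻¹ * Bh⁻¹ * A1h * Bh = ν := by
    rw [hA1h, hBh, comm_central_right (T1 * z1) TB zb hzbc,
      comm_central_left T1 TB z1 hz1c, hnu]
  -- all relators hold for the lifts
  have hlift : ∀ r ∈ rels p, FreeGroup.lift xmap r = 1 := by
    intro r hr
    simp only [rels, Set.mem_insert_iff, Set.mem_singleton_iff] at hr
    rcases hr with rfl|rfl|rfl|rfl|rfl|rfl|rfl|rfl|rfl|rfl|rfl|rfl|rfl|rfl|rfl|rfl|rfl|rfl|rfl|rfl|rfl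
    · simp only [c, _root_.map_mul, _root_.map_inv, FreeGroup.lift_apply_of, hxmap]
      rw [hA1comm]; group
    · simp only [c, _root_.map_mul, _root_.map_inv, FreeGroup.lift_apply_of, hxmap]
      rw [← hx3]; group
    · simp only [c, _root_.map_mul, _root_.map_inv, FreeGroup.lift_apply_of, hxmap]
      rw [← hx4]; group
    · simp only [c, _root_.map_mul, _root_.map_inv, FreeGroup.lift_apply_of, hxmap]
      rw [hA1Bcomm, ← stepO4]; group
    · simp only [c, _root_.map_mul, _root_.map_inv, FreeGroup.lift_apply_of, hxmap]
      rw [hA1x2comm, hμ4]; group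
    · simp only [c, _root_.map_mul, _root_.map_inv, FreeGroup.lift_apply_of, hxmap]
      exact comm_to_rel (hc4 Ah).symm
    · simp only [c, _root_.map_mul, _root_.map_inv, FreeGroup.lift_apply_of, hxmap]
      exact comm_to_rel (cp _ _ (by rw [hprAh, hprBh]; exact PGen.hC7 p))
    · simp only [c, _root_.map_mul, _root_.map_inv, FreeGroup.lift_apply_of, hxmap]
      exact comm_to_rel (cp _ _ (by rw [hprA1h, hprx3]; exact PGen.hC8 p))
    · simp only [c, _root_.map_mul, _root_.map_inv, FreeGroup.lift_apply_of, hxmap]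
      exact comm_to_rel (hc4 A1h).symm
    · simp only [c, _root_.map_mul, _root_.map_inv, FreeGroup.lift_apply_of, hxmap]
      exact comm_to_rel h23
    · simp only [c, _root_.map_mul, _root_.map_inv, FreeGroup.lift_apply_of, hxmap]
      exact comm_to_rel (hc4 x2).symm
    · simp only [c, _root_.map_mul, _root_.map_inv, FreeGroup.lift_apply_of, hxmap]
      exact comm_to_rel (cp _ _ (by rw [hprx2, hprBh]; exact PGen.hC12 p))
    · simp only [c, _root_.map_mul, _root_.map_inv, FreeGroup.lift_apply_of, hxmap]
      exact comm_to_rel (hc4 x3).symm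
    · simp only [c, _root_.map_mul, _root_.map_inv, FreeGroup.lift_apply_of, hxmap]
      exact comm_to_rel (cp _ _ (by rw [hprx3, hprBh]; exact PGen.hC14 p))
    · simp only [c, _root_.map_mul, _root_.map_inv, FreeGroup.lift_apply_of, hxmap]
      exact comm_to_rel (hc4 Bh)
    · simp only [_root_.map_pow, FreeGroup.lift_apply_of, hxmap]
      exact hApow
    · simp only [_root_.map_pow, FreeGroup.lift_apply_of, hxmap]
      exact hBpow
    · simp only [_root_.map_mul, _root_.map_pow, FreeGroup.lift_apply_of, hxmap]
      exact hO18
    · simp only [_root_.map_mul, _root_.map_pow, FreeGroup.lift_apply_of, hxmap]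
      rw [← mul_assoc] at px2
      exact px2
    · simp only [_root_.map_mul, _root_.map_pow, FreeGroup.lift_apply_of, hxmap]
      exact px3
    · simp only [_root_.map_pow, FreeGroup.lift_apply_of, hxmap]
      exact px4
  -- assemble the splitting
  set s := PresentedGroup.toGroup hlift with hsdef
  have hext : (Ext.proj F).comp s = MonoidHom.id (PresentedGroup (rels p)) := by
    apply PresentedGroup.ext
    intro x
    have hof : s (PresentedGroup.of x) = xmap x := PresentedGroup.toGroup.of hlift
    cases x with
    | a =>
      show Ext.proj F (s (PresentedGroup.of Gen.a)) = PresentedGroup.of Gen.a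
      rw [hof]; exact hprAh
    | a1 =>
      show Ext.proj F (s (PresentedGroup.of Gen.a1)) = PresentedGroup.of Gen.a1
      rw [hof]; exact hprA1h
    | a2 =>
      show Ext.proj F (s (PresentedGroup.of Gen.a2)) = PresentedGroup.of Gen.a2
      rw [hof]; exact hprx2
    | a3 =>
      show Ext.proj F (s (PresentedGroup.of Gen.a3)) = PresentedGroup.of Gen.a3
      rw [hof]; exact hprx3
    | a4 =>
      show Ext.proj F (s (PresentedGroup.of Gen.a4)) = PresentedGroup.of Gen.a4
      rw [hof]; exact hprx4
    | b =>
      show Ext.proj F (s (PresentedGroup.of Gen.b)) = PresentedGroup.of Gen.b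
      rw [hof]; exact hprBh
  have hs : ∀ g, Ext.proj F (s g) = g := by
    intro g
    calc Ext.proj F (s g) = ((Ext.proj F).comp s) g := rfl
      _ = g := by rw [hext]; rfl
  exact Ext.coboundary_of_splitting s hs

end Stmt6
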